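/- arXiv:1604.06815 — 7 statements merged into one kernel-verified Lean document; each statement's English description precedes it below -/
import Mathlib

section
/- Pointwise decomposition of the TREX objective: for every β ∈ ℝ^p such that Xᵀ(Y − Xβ) ≠ 0, one has f(β)/φ = min over all pairs (j, s) with j ∈ {1,…,p}, s ∈ {−1, +1} and s·φ·x_jᵀ(Y − Xβ) > 0 of the value ‖Y − Xβ‖₂²/(s·φ·x_jᵀ(Y − Xβ)) + ‖β‖₁; in particular the minimum is taken over a nonempty set of pairs. -/
open Matrix BigOperators

/-- **Pointwise decomposition of the TREX objective.**
For every `β` such that `Xᵀ(Y − Xβ) ≠ 0`, the value `f(β)/φ`, where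
`f(β) = ‖Y − Xβ‖₂²/‖Xᵀ(Y − Xβ)‖_∞ + φ‖β‖₁`, is the minimum (in the sense of `IsLeast`,
so in particular the set of candidate values is nonempty) over all pairs `(j, s)` with
`j ∈ {1,…,p}`, `s ∈ {−1, +1}` and `s·φ·x_jᵀ(Y − Xβ) > 0` of
`‖Y − Xβ‖₂²/(s·φ·x_jᵀ(Y − Xβ)) + ‖β‖₁`. -/
theorem trex_pointwise_decomposition
    (n p : ℕ) (X : Matrix (Fin n) (Fin p) ℝ) (Y : Fin n → ℝ)
    (φ : ℝ) (hφ : 0 < φ) (β : Fin p → ℝ)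
    (h : Xᵀ.mulVec (Y - X.mulVec β) ≠ 0) :
    IsLeast
      { v : ℝ | ∃ (j : Fin p) (s : ℝ), (s = 1 ∨ s = -1) ∧
          0 < s * φ * (Xᵀ.mulVec (Y - X.mulVec β)) j ∧
          v = (∑ i, (Y i - X.mulVec β i) ^ 2) /
                (s * φ * (Xᵀ.mulVec (Y - X.mulVec β)) j) + ∑ k, |β k| }
      (((∑ i, (Y i - X.mulVec β i) ^ 2) /
          (⨆ j, |(Xᵀ.mulVec (Y - X.mulVec β)) j|) + φ * ∑ k, |β k|) / φ) := by
  set r := Xᵀ.mulVec (Y - X.mulVec β) with hr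
  set S := ∑ i, (Y i - X.mulVec β i) ^ 2 with hS
  set L := ∑ k, |β k| with hLdef
  have hSnn : 0 ≤ S := Finset.sum_nonneg fun i _ => sq_nonneg _
  have hne : Nonempty (Fin p) := by
    rcases p with _ | p
    · exact absurd (Subsingleton.elim r 0) h
    · exact ⟨0⟩
  obtain ⟨j₁, hj₁⟩ := Function.ne_iff.mp h
  have hbdd : BddAbove (Set.range fun j => |r j|) :=
    Set.Finite.bddAbove (Set.finite_range _)
  obtain ⟨j₀, hj₀⟩ := Finite.exists_max fun j => |r j|
  have hM : (⨆ j, |r j|) = |r j₀| :=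
    le_antisymm (ciSup_le hj₀) (le_ciSup hbdd j₀)
  have hMpos : 0 < |r j₀| := lt_of_lt_of_le (abs_pos.mpr hj₁) (hj₀ j₁)
  have hLHS : (S / (⨆ j, |r j|) + φ * L) / φ = S / (φ * |r j₀|) + L := by
    rw [hM]; field_simp
  set s₀ : ℝ := if 0 ≤ r j₀ then 1 else -1 with hs₀
  have hs₀r : s₀ * r j₀ = |r j₀| := by
    rw [hs₀]; split_ifs with h0
    · rw [abs_of_nonneg h0]; ring
    · rw [abs_of_neg (lt_of_not_ge h0)]; ring
  constructor
  · refine ⟨j₀, s₀, ?_, ?_, ?_⟩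
    · rw [hs₀]; split_ifs <;> simp
    · have : s₀ * φ * r j₀ = φ * (s₀ * r j₀) := by ring
      rw [this, hs₀r]; positivity
    · rw [hLHS]
      have : s₀ * φ * r j₀ = φ * |r j₀| := by rw [← hs₀r]; ring
      rw [this]
  · rintro v ⟨j, s, hs, hpos, rfl⟩
    rw [hLHS]
    have hsr : 0 < s * r j := by nlinarith
    have habs : |s| = 1 := by rcases hs with rfl | rfl <;> simp
    have hle : s * r j ≤ |r j₀| := by
      calc s * r j ≤ |s * r j| := le_abs_self _
        _ = |r j| := by rw [abs_mul, habs, one_mul]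
        _ ≤ |r j₀| := hj₀ j
    have hden : s * φ * r j ≤ φ * |r j₀| := by
      have := mul_le_mul_of_nonneg_left hle hφ.le
      nlinarith
    have : S / (φ * |r j₀|) ≤ S / (s * φ * r j) :=
      div_le_div_of_nonneg_left hSnn (by nlinarith) hden
    linarith
end

section
/- Correctness of the c-TREX reduction: the global infimum of the (rescaled) TREX problem equals the minimum of 2p convex subproblem values. Precisely, with values taken in [0, ∞], P* := inf over {β ∈ ℝ^p : Xᵀ(Y − Xβ) ≠ 0} of [‖Y − Xβ‖₂²/(φ‖Xᵀ(Y − Xβ)‖_∞) + ‖β‖₁] satisfies P* = min over j ∈ {1,…,p} and s ∈ {−1, +1} of P*(s·φ·x_j), where for nonzero v ∈ ℝ^n, P*(v) := inf over {β ∈ ℝ^p : vᵀ(Y − Xβ) > 0} of [‖Y − Xβ‖₂²/(vᵀ(Y − Xβ)) + ‖β‖₁] (an infimum over an empty set being +∞). -/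
open Matrix BigOperators ENNReal

/-- The value `P*(v)` of the convex TREX subproblem associated with a vector `v`:
the infimum (in `[0,∞]`) over `{β : vᵀ(Y − Xβ) > 0}` of
`‖Y − Xβ‖₂²/(vᵀ(Y − Xβ)) + ‖β‖₁`; the infimum over an empty set is `+∞`. -/
noncomputable def trexSubproblemValue (n p : ℕ) (X : Matrix (Fin n) (Fin p) ℝ)
    (Y : Fin n → ℝ) (v : Fin n → ℝ) : ℝ≥0∞ :=
  ⨅ β ∈ {β : Fin p → ℝ | 0 < ∑ i, v i * (Y i - X.mulVec β i)},
    ENNReal.ofReal ((∑ i, (Y i - X.mulVec β i) ^ 2) /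
      (∑ i, v i * (Y i - X.mulVec β i)) + ∑ k, |β k|)

private lemma sum_mul_eq_ctrex (n p : ℕ) (X : Matrix (Fin n) (Fin p) ℝ) (Y : Fin n → ℝ)
    (β : Fin p → ℝ) (c : ℝ) (j : Fin p) :
    ∑ i, (c * X i j) * (Y i - X.mulVec β i) = c * (Xᵀ.mulVec (Y - X.mulVec β)) j := by
  simp only [Matrix.mulVec, dotProduct, Matrix.transpose_apply, Pi.sub_apply,
    Finset.mul_sum]
  exact Finset.sum_congr rfl fun i _ => by ring

/-- **Correctness of the c-TREX reduction.** The global infimum (in `[0,∞]`) of the rescaled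
TREX objective `‖Y − Xβ‖₂²/(φ‖Xᵀ(Y − Xβ)‖_∞) + ‖β‖₁` over `{β : Xᵀ(Y − Xβ) ≠ 0}`
equals the minimum over `j ∈ {1,…,p}` and `s ∈ {−1,+1}` of the subproblem values
`P*(s·φ·x_j)`. -/
theorem ctrex_reduction (n p : ℕ) (X : Matrix (Fin n) (Fin p) ℝ) (Y : Fin n → ℝ)
    (φ : ℝ) (hφ : 0 < φ) :
    (⨅ β ∈ {β : Fin p → ℝ | Xᵀ.mulVec (Y - X.mulVec β) ≠ 0},
        ENNReal.ofReal ((∑ i, (Y i - X.mulVec β i) ^ 2) /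
          (φ * ⨆ j, |(Xᵀ.mulVec (Y - X.mulVec β)) j|) + ∑ k, |β k|))
      = ⨅ j : Fin p,
          min (trexSubproblemValue n p X Y (fun i => φ * X i j))
              (trexSubproblemValue n p X Y (fun i => -φ * X i j)) := by
  have hA : ∀ β : Fin p → ℝ, (0:ℝ) ≤ ∑ i, (Y i - X.mulVec β i) ^ 2 :=
    fun β => Finset.sum_nonneg fun i _ => sq_nonneg _
  apply le_antisymm
  · refine le_iInf fun j => le_min ?_ ?_
    · refine le_iInf₂ fun β hβ => ?_
      simp only [Set.mem_setOf_eq] at hβ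
      rw [sum_mul_eq_ctrex] at hβ
      have hgj : Xᵀ.mulVec (Y - X.mulVec β) j ≠ 0 := by
        intro h0; rw [h0, mul_zero] at hβ; exact lt_irrefl 0 hβ
      have hne : Xᵀ.mulVec (Y - X.mulVec β) ≠ 0 := by
        intro h0; exact hgj (by rw [h0]; rfl)
      refine le_trans (iInf₂_le β hne) ?_
      apply ENNReal.ofReal_le_ofReal
      rw [sum_mul_eq_ctrex]
      have hM : |Xᵀ.mulVec (Y - X.mulVec β) j| ≤ ⨆ j', |Xᵀ.mulVec (Y - X.mulVec β) j'| :=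
        le_ciSup (f := fun j' => |Xᵀ.mulVec (Y - X.mulVec β) j'|) (Set.Finite.bddAbove (Set.finite_range _)) j
      refine add_le_add_left (div_le_div_of_nonneg_left (hA β) hβ ?_) _
      calc φ * Xᵀ.mulVec (Y - X.mulVec β) j ≤ φ * |Xᵀ.mulVec (Y - X.mulVec β) j| := by
              gcongr; exact le_abs_self _
          _ ≤ φ * ⨆ j', |Xᵀ.mulVec (Y - X.mulVec β) j'| := by gcongr
    · refine le_iInf₂ fun β hβ => ?_
      simp only [Set.mem_setOf_eq] at hβ
      rw [sum_mul_eq_ctrex] at hβ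
      have hgj : Xᵀ.mulVec (Y - X.mulVec β) j ≠ 0 := by
        intro h0; rw [h0, mul_zero] at hβ; exact lt_irrefl 0 hβ
      have hne : Xᵀ.mulVec (Y - X.mulVec β) ≠ 0 := by
        intro h0; exact hgj (by rw [h0]; rfl)
      refine le_trans (iInf₂_le β hne) ?_
      apply ENNReal.ofReal_le_ofReal
      rw [sum_mul_eq_ctrex]
      have hM : |Xᵀ.mulVec (Y - X.mulVec β) j| ≤ ⨆ j', |Xᵀ.mulVec (Y - X.mulVec β) j'| :=
        le_ciSup (f := fun j' => |Xᵀ.mulVec (Y - X.mulVec β) j'|) (Set.Finite.bddAbove (Set.finite_range _)) j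
      refine add_le_add_left (div_le_div_of_nonneg_left (hA β) hβ ?_) _
      calc -φ * Xᵀ.mulVec (Y - X.mulVec β) j = φ * -(Xᵀ.mulVec (Y - X.mulVec β) j) := by ring
          _ ≤ φ * |Xᵀ.mulVec (Y - X.mulVec β) j| := by gcongr; exact neg_le_abs _
          _ ≤ φ * ⨆ j', |Xᵀ.mulVec (Y - X.mulVec β) j'| := by gcongr
  · refine le_iInf₂ fun β hβ => ?_
    simp only [Set.mem_setOf_eq] at hβ
    obtain ⟨j₀, hj₀⟩ := Function.ne_iff.mp hβ
    haveI : Nonempty (Fin p) := ⟨j₀⟩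
    obtain ⟨jm, hjm⟩ := Finite.exists_max (fun j => |Xᵀ.mulVec (Y - X.mulVec β) j|)
    have hMeq : (⨆ j, |Xᵀ.mulVec (Y - X.mulVec β) j|) = |Xᵀ.mulVec (Y - X.mulVec β) jm| :=
      le_antisymm (ciSup_le hjm) (le_ciSup (f := fun j' => |Xᵀ.mulVec (Y - X.mulVec β) j'|) (Set.Finite.bddAbove (Set.finite_range _)) jm)
    have hMpos : 0 < |Xᵀ.mulVec (Y - X.mulVec β) jm| :=
      lt_of_lt_of_le (abs_pos.mpr hj₀) (hjm j₀)
    refine le_trans (iInf_le _ jm) ?_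
    rcases lt_or_ge 0 (Xᵀ.mulVec (Y - X.mulVec β) jm) with hpos | hle
    · refine le_trans (min_le_left _ _) ?_
      refine le_trans (iInf₂_le β ?_) ?_
      · show (0:ℝ) < ∑ i, (φ * X i jm) * (Y i - X.mulVec β i)
        rw [sum_mul_eq_ctrex]; exact mul_pos hφ hpos
      · apply ENNReal.ofReal_le_ofReal
        rw [sum_mul_eq_ctrex, hMeq, abs_of_pos hpos]
    · have hneg : Xᵀ.mulVec (Y - X.mulVec β) jm < 0 :=
        lt_of_le_of_ne hle (fun h => by rw [h, abs_zero] at hMpos; exact lt_irrefl 0 hMpos)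
      refine le_trans (min_le_right _ _) ?_
      refine le_trans (iInf₂_le β ?_) ?_
      · show (0:ℝ) < ∑ i, (-φ * X i jm) * (Y i - X.mulVec β i)
        rw [sum_mul_eq_ctrex]
        nlinarith
      · apply ENNReal.ofReal_le_ofReal
        rw [sum_mul_eq_ctrex, hMeq, abs_of_neg hneg, mul_neg, neg_mul]
end

section
/- Convexity of each TREX subproblem: for any fixed v ∈ ℝ^n, the set H_v = {β ∈ ℝ^p : vᵀ(Y − Xβ) > 0} is convex, and the function g_v(β) = ‖Y − Xβ‖₂²/(vᵀ(Y − Xβ)) + ‖β‖₁ is convex on H_v. -/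
open Matrix BigOperators

/-- Quadratic-over-linear inequality. -/
lemma quad_over_lin (A B C s t a b : ℝ) (hA : 0 ≤ A) (hB : 0 ≤ B)
    (hCS : C ^ 2 ≤ A * B) (hs : 0 < s) (ht : 0 < t) (ha : 0 ≤ a) (hb : 0 ≤ b)
    (hab : a + b = 1) :
    (a ^ 2 * A + 2 * a * b * C + b ^ 2 * B) / (a * s + b * t)
      ≤ a * (A / s) + b * (B / t) := by
  have hd : 0 < a * s + b * t := by
    rcases (ha.eq_or_lt.imp Eq.symm id) with h | h
    · have ha0 : a = 0 := h
      have hb1 : b = 1 := by linarith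
      rw [ha0, hb1]; simpa using ht
    · nlinarith [mul_nonneg hb ht.le]
  have hst : 0 < s * t := mul_pos hs ht
  have hexpr : 2 * C * s * t ≤ A * t ^ 2 + B * s ^ 2 := by
    rcases (hA.eq_or_lt.imp Eq.symm id) with h | h
    · have hC0 : C = 0 := by
        have : C ^ 2 ≤ 0 := by nlinarith
        nlinarith [sq_nonneg C]
      rw [hC0, ← h]; nlinarith [mul_nonneg hB (sq_nonneg s)]
    · nlinarith [sq_nonneg (A * t - C * s),
        mul_nonneg (sub_nonneg.2 hCS) (sq_nonneg s)]
  have hR : a * (A / s) + b * (B / t) = (a * A * t + b * B * s) / (s * t) := by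
    field_simp
  rw [hR, div_le_div_iff₀ hd hst]
  have hab2 : 0 ≤ a * b := mul_nonneg ha hb
  nlinarith [mul_nonneg hab2 (by linarith : (0:ℝ) ≤ A * t ^ 2 + B * s ^ 2 - 2 * C * s * t)]

/-- **Convexity of each TREX subproblem.** For any fixed `v ∈ ℝⁿ`, the half-space
`H_v = {β : vᵀ(Y − Xβ) > 0}` is convex, and the subproblem objective
`g_v(β) = ‖Y − Xβ‖₂²/(vᵀ(Y − Xβ)) + ‖β‖₁` is convex on `H_v`. -/
theorem trex_subproblem_convex (n p : ℕ) (X : Matrix (Fin n) (Fin p) ℝ)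
    (Y v : Fin n → ℝ) :
    Convex ℝ {β : Fin p → ℝ | 0 < ∑ i, v i * (Y i - X.mulVec β i)} ∧
    ConvexOn ℝ {β : Fin p → ℝ | 0 < ∑ i, v i * (Y i - X.mulVec β i)}
      (fun β => (∑ i, (Y i - X.mulVec β i) ^ 2) /
          (∑ i, v i * (Y i - X.mulVec β i)) + ∑ k, |β k|) := by
  -- residuals behave affinely
  have hres : ∀ (x y : Fin p → ℝ) (a b : ℝ), a + b = 1 → ∀ i,
      Y i - X.mulVec (a • x + b • y) i
        = a * (Y i - X.mulVec x i) + b * (Y i - X.mulVec y i) := by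
    intro x y a b hab i
    have h : X.mulVec (a • x + b • y) i = a * X.mulVec x i + b * X.mulVec y i := by
      rw [Matrix.mulVec_add, Matrix.mulVec_smul, Matrix.mulVec_smul]
      simp [smul_eq_mul]
    rw [h]
    have hb' : b = 1 - a := by linarith
    rw [hb']; ring
  -- linear part behaves affinely
  have hlin : ∀ (x y : Fin p → ℝ) (a b : ℝ), a + b = 1 →
      ∑ i, v i * (Y i - X.mulVec (a • x + b • y) i)
        = a * (∑ i, v i * (Y i - X.mulVec x i))
          + b * (∑ i, v i * (Y i - X.mulVec y i)) := by
    intro x y a b hab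
    rw [Finset.mul_sum, Finset.mul_sum, ← Finset.sum_add_distrib]
    refine Finset.sum_congr rfl fun i _ => ?_
    rw [hres x y a b hab i]; ring
  have hset : Convex ℝ {β : Fin p → ℝ | 0 < ∑ i, v i * (Y i - X.mulVec β i)} := by
    intro x hx y hy a b ha hb hab
    simp only [Set.mem_setOf_eq] at *
    rw [hlin x y a b hab]
    rcases (ha.eq_or_lt.imp Eq.symm id) with h | h
    · have ha0 : a = 0 := h
      have hb1 : b = 1 := by linarith
      rw [ha0, hb1]; simpa using hy
    · nlinarith [mul_nonneg hb hy.le]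
  refine ⟨hset, hset, ?_⟩
  intro x hx y hy a b ha hb hab
  simp only [Set.mem_setOf_eq] at hx hy
  simp only [smul_eq_mul]
  set A := ∑ i, (Y i - X.mulVec x i) ^ 2 with hAdef
  set B := ∑ i, (Y i - X.mulVec y i) ^ 2 with hBdef
  set C := ∑ i, (Y i - X.mulVec x i) * (Y i - X.mulVec y i) with hCdef
  set s := ∑ i, v i * (Y i - X.mulVec x i) with hsdef
  set t := ∑ i, v i * (Y i - X.mulVec y i) with htdef
  have hA : 0 ≤ A := Finset.sum_nonneg fun i _ => sq_nonneg _
  have hB : 0 ≤ B := Finset.sum_nonneg fun i _ => sq_nonneg _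
  have hCS : C ^ 2 ≤ A * B := Finset.sum_mul_sq_le_sq_mul_sq Finset.univ _ _
  have hQ : ∑ i, (Y i - X.mulVec (a • x + b • y) i) ^ 2
      = a ^ 2 * A + 2 * a * b * C + b ^ 2 * B := by
    rw [hAdef, hBdef, hCdef, Finset.mul_sum, Finset.mul_sum, Finset.mul_sum,
      ← Finset.sum_add_distrib, ← Finset.sum_add_distrib]
    refine Finset.sum_congr rfl fun i _ => ?_
    rw [hres x y a b hab i]; ring
  have hL : ∑ i, v i * (Y i - X.mulVec (a • x + b • y) i) = a * s + b * t :=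
    hlin x y a b hab
  rw [hQ, hL]
  have h1 : (a ^ 2 * A + 2 * a * b * C + b ^ 2 * B) / (a * s + b * t)
      ≤ a * (A / s) + b * (B / t) :=
    quad_over_lin A B C s t a b hA hB hCS hx hy ha hb hab
  have h2 : ∑ k, |(a • x + b • y) k| ≤ a * ∑ k, |x k| + b * ∑ k, |y k| := by
    rw [Finset.mul_sum, Finset.mul_sum, ← Finset.sum_add_distrib]
    refine Finset.sum_le_sum fun k _ => ?_
    simp only [Pi.add_apply, Pi.smul_apply, smul_eq_mul]
    calc |a * x k + b * y k| ≤ |a * x k| + |b * y k| := abs_add_le _ _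
      _ = a * |x k| + b * |y k| := by
          rw [abs_mul, abs_mul, abs_of_nonneg ha, abs_of_nonneg hb]
  calc (a ^ 2 * A + 2 * a * b * C + b ^ 2 * B) / (a * s + b * t)
        + ∑ k, |(a • x + b • y) k|
      ≤ (a * (A / s) + b * (B / t)) + (a * ∑ k, |x k| + b * ∑ k, |y k|) :=
        add_le_add h1 h2
    _ = a * (A / s + ∑ k, |x k|) + b * (B / t + ∑ k, |y k|) := by ring
end

section
/- Gram invariance of the knockoff swap: if X̃ ∈ ℝ^{n×p} is a knockoff matrix for X ∈ ℝ^{n×p}, then for every subset S ⊆ {1,…,p}, the swapped augmented matrix satisfies A_swap(S)ᵀ A_swap(S) = Aᵀ A, where A = [X X̃]. -/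
open Matrix BigOperators

/-- The column-index permutation that swaps an original feature `j` with its
knockoff copy exactly when `j ∈ S`. -/
def knockoffSwap {p : ℕ} (S : Finset (Fin p)) : Fin p ⊕ Fin p → Fin p ⊕ Fin p
  | Sum.inl j => if j ∈ S then Sum.inr j else Sum.inl j
  | Sum.inr j => if j ∈ S then Sum.inl j else Sum.inr j

/-- **Gram invariance of the knockoff swap.** If `X̃` is a knockoff matrix for `X`
(i.e. `X̃ᵀX̃ = XᵀX` and `XᵀX̃ = XᵀX − diag(s)` with `s ≥ 0`), then for every subset `S`
of `{1,…,p}`, the swapped augmented matrix `A_swap(S)` (where `A = [X X̃]`) satisfies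
`A_swap(S)ᵀ A_swap(S) = Aᵀ A`. -/
theorem knockoff_swap_gram_invariant (n p : ℕ)
    (X Xt : Matrix (Fin n) (Fin p) ℝ) (s : Fin p → ℝ)
    (hk1 : Xtᵀ * Xt = Xᵀ * X)
    (hk2 : Xᵀ * Xt = Xᵀ * X - Matrix.diagonal s)
    (hk3 : ∀ j, 0 ≤ s j)
    (S : Finset (Fin p)) :
    ((Matrix.fromCols X Xt).submatrix id (knockoffSwap S))ᵀ *
        (Matrix.fromCols X Xt).submatrix id (knockoffSwap S)
      = (Matrix.fromCols X Xt)ᵀ * Matrix.fromCols X Xt := by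
  -- X̃ᵀX = XᵀX̃ since XᵀX − diag s is symmetric
  have hsym : Xtᵀ * X = Xᵀ * Xt := by
    have h := congrArg Matrix.transpose hk2
    simp only [Matrix.transpose_sub, Matrix.transpose_mul, Matrix.transpose_transpose,
      Matrix.diagonal_transpose] at h
    rw [h, hk2]
  -- reduce to a submatrix of the original Gram matrix
  have hmul : ((Matrix.fromCols X Xt).submatrix id (knockoffSwap S))ᵀ *
      (Matrix.fromCols X Xt).submatrix id (knockoffSwap S)
      = ((Matrix.fromCols X Xt)ᵀ * Matrix.fromCols X Xt).submatrix
          (knockoffSwap S) (knockoffSwap S) := by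
    rw [Matrix.transpose_submatrix,
      Matrix.submatrix_mul _ _ (knockoffSwap S) id (knockoffSwap S) Function.bijective_id]
  rw [hmul]
  have hG : (Matrix.fromCols X Xt)ᵀ * Matrix.fromCols X Xt
      = Matrix.fromBlocks (Xᵀ * X) (Xᵀ * Xt) (Xᵀ * Xt) (Xᵀ * X) := by
    rw [Matrix.transpose_fromCols, Matrix.fromRows_mul_fromCols, hsym, hk1]
  rw [hG]
  have hoff : ∀ i j : Fin p, i ≠ j → (Xᵀ * Xt) i j = (Xᵀ * X) i j := by
    intro i j h
    rw [hk2]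
    simp [Matrix.sub_apply, Matrix.diagonal_apply_ne _ h]
  ext i j
  rcases i with i | i <;> rcases j with j | j <;>
    simp only [Matrix.submatrix_apply, knockoffSwap] <;>
    by_cases hi : i ∈ S <;> by_cases hj : j ∈ S <;>
    simp [hi, hj, Matrix.fromBlocks] <;>
    (try (have hij : i ≠ j := by rintro rfl; simp_all)) <;>
    first
      | exact hoff i j hij
      | exact (hoff i j hij).symm
end

section
/- Orthogonal alignment of matrices with equal Gram matrices (Lemma on R_swap): let A, B ∈ ℝ^{n×m} satisfy AᵀA = BᵀB. Then there exists an orthogonal matrix R ∈ ℝ^{n×n} (i.e., RᵀR = I_n) such that R A = B. In particular, for a knockoff matrix X̃ for X and any S ⊆ {1,…,p}, there exists an orthogonal R with R[X X̃] = [X X̃]_swap(S). -/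
open Matrix BigOperators

lemma gram_dot {ι : Type*} [Fintype ι] (n : ℕ) (A : Matrix (Fin n) ι ℝ) (x y : ι → ℝ) :
    (A *ᵥ x) ⬝ᵥ (A *ᵥ y) = x ⬝ᵥ ((Aᵀ * A) *ᵥ y) := by
  conv_rhs => rw [← Matrix.mulVec_mulVec, Matrix.dotProduct_mulVec, Matrix.vecMul_transpose]


lemma gram_align {ι : Type*} [Fintype ι] [DecidableEq ι] (n : ℕ) (A B : Matrix (Fin n) ι ℝ)
    (h : Aᵀ * A = Bᵀ * B) :
    ∃ R : Matrix (Fin n) (Fin n) ℝ, Rᵀ * R = 1 ∧ R * A = B := by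
  set fA := Matrix.toEuclideanLin A with hfA
  set fB := Matrix.toEuclideanLin B with hfB
  have key : ∀ x y : EuclideanSpace ℝ (ι),
      inner ℝ (fA x) (fA y) = (inner ℝ (fB x) (fB y) : ℝ) := by
    intro x y
    have h1 : (inner ℝ (fA x) (fA y) : ℝ) =
        ((WithLp.equiv 2 (ι → ℝ)) x) ⬝ᵥ ((Aᵀ * A) *ᵥ ((WithLp.equiv 2 (ι → ℝ)) y)) := by
      rw [← gram_dot]
      simp [hfA, Matrix.toEuclideanLin_apply, PiLp.inner_apply, dotProduct, mul_comm]
    have h2 : (inner ℝ (fB x) (fB y) : ℝ) =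
        ((WithLp.equiv 2 (ι → ℝ)) x) ⬝ᵥ ((Bᵀ * B) *ᵥ ((WithLp.equiv 2 (ι → ℝ)) y)) := by
      rw [← gram_dot]
      simp [hfB, Matrix.toEuclideanLin_apply, PiLp.inner_apply, dotProduct, mul_comm]
    rw [h1, h2, h]
  have hnorm : ∀ x, ‖fA x‖ = ‖fB x‖ := by
    intro x
    have := key x x
    rw [real_inner_self_eq_norm_mul_norm, real_inner_self_eq_norm_mul_norm] at this
    exact (mul_self_inj (norm_nonneg _) (norm_nonneg _)).mp this
  have hker : LinearMap.ker fA ≤ LinearMap.ker fB := by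
    intro x hx
    rw [LinearMap.mem_ker] at hx ⊢
    have := hnorm x
    rw [hx, norm_zero] at this
    exact norm_eq_zero.mp this.symm
  set e := fA.quotKerEquivRange
  set L0 : (LinearMap.range fA) →ₗ[ℝ] EuclideanSpace ℝ (Fin n) :=
    ((LinearMap.ker fA).liftQ fB hker).comp (e.symm : (LinearMap.range fA) →ₗ[ℝ] _)
  have hL0 : ∀ x : EuclideanSpace ℝ (ι), L0 ⟨fA x, LinearMap.mem_range_self fA x⟩ = fB x := by
    intro x
    have he : e.symm ⟨fA x, LinearMap.mem_range_self fA x⟩ =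
        Submodule.Quotient.mk x := by
      rw [LinearEquiv.symm_apply_eq]
      rfl
    simp [L0, he]
  have hL0norm : ∀ v : (LinearMap.range fA), ‖L0 v‖ = ‖v‖ := by
    rintro ⟨v, x, rfl⟩
    rw [hL0 x, ← hnorm x]
    rfl
  set L : (LinearMap.range fA) →ₗᵢ[ℝ] EuclideanSpace ℝ (Fin n) := ⟨L0, hL0norm⟩
  set G := L.extend
  have hG : ∀ x, G (fA x) = fB x := by
    intro x
    have := L.extend_apply ⟨fA x, LinearMap.mem_range_self fA x⟩
    rw [this]
    exact hL0 x
  set R := Matrix.toEuclideanLin.symm (G.toLinearMap : EuclideanSpace ℝ (Fin n) →ₗ[ℝ] EuclideanSpace ℝ (Fin n)) with hR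
  have hRG : Matrix.toEuclideanLin R = G.toLinearMap := Matrix.toEuclideanLin.apply_symm_apply _
  have hRmul : ∀ v : EuclideanSpace ℝ (Fin n), G v = Matrix.toEuclideanLin R v := by
    intro v; rw [hRG]; rfl
  refine ⟨R, ?_, ?_⟩
  · ext i j
    have := G.inner_map_map (EuclideanSpace.single i (1:ℝ)) (EuclideanSpace.single j (1:ℝ))
    rw [hRmul, hRmul] at this
    simp only [Matrix.toEuclideanLin_apply, PiLp.inner_apply, RCLike.inner_apply, conj_trivial,
      EuclideanSpace.inner_single_left, EuclideanSpace.single_apply,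
      EuclideanSpace.ofLp_single] at this
    simp only [Matrix.mul_apply, Matrix.transpose_apply, Matrix.one_apply]
    rw [show (∑ k, R k i * R k j) = ∑ k, (R *ᵥ Pi.single i 1) k * (R *ᵥ Pi.single j 1) k from by
      simp [Matrix.mulVec, dotProduct, Pi.single_apply, mul_ite, ite_mul]]
    rw [Finset.sum_congr rfl (fun k _ => mul_comm ((R *ᵥ Pi.single i 1) k) _), this]
    simp [Pi.single_apply, ite_and]
  · apply Matrix.toEuclideanLin.injective
    apply LinearMap.ext
    intro x
    have h1 : Matrix.toEuclideanLin (R * A) x = Matrix.toEuclideanLin R (fA x) := by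
      simp [Matrix.toEuclideanLin_apply, hfA, Matrix.mulVec_mulVec]
    rw [h1, ← hRmul, hG]

/-- **Orthogonal alignment of matrices with equal Gram matrices.** If `A, B ∈ ℝ^{n×m}`
satisfy `AᵀA = BᵀB`, then there is an orthogonal `R ∈ ℝ^{n×n}` with `R A = B`.
In particular, for a knockoff matrix `X̃` for `X` and any `S ⊆ {1,…,p}`, there is an
orthogonal `R` with `R [X X̃] = [X X̃]_swap(S)`. -/
theorem orthogonal_alignment (n m : ℕ) (A B : Matrix (Fin n) (Fin m) ℝ)
    (h : Aᵀ * A = Bᵀ * B) :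
    (∃ R : Matrix (Fin n) (Fin n) ℝ, Rᵀ * R = 1 ∧ R * A = B) ∧
    (∀ (p : ℕ) (X Xt : Matrix (Fin n) (Fin p) ℝ) (s : Fin p → ℝ),
      Xtᵀ * Xt = Xᵀ * X →
      Xᵀ * Xt = Xᵀ * X - Matrix.diagonal s →
      (∀ j, 0 ≤ s j) →
      ∀ S : Finset (Fin p),
        ∃ R : Matrix (Fin n) (Fin n) ℝ, Rᵀ * R = 1 ∧
          R * Matrix.fromCols X Xt
            = (Matrix.fromCols X Xt).submatrix id (knockoffSwap S)) := by
  constructor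
  · exact gram_align n A B h
  · intro p X Xt s h1 h2 hs S
    set A' := Matrix.fromCols X Xt with hA'
    set f := knockoffSwap S with hf
    have h3 : Xtᵀ * X = Xᵀ * X - Matrix.diagonal s := by
      have := congrArg Matrix.transpose h2
      simpa [Matrix.transpose_mul, Matrix.transpose_sub, Matrix.diagonal_transpose] using this
    have hGram : A'ᵀ * A' = Matrix.fromBlocks (Xᵀ*X) (Xᵀ*Xt) (Xtᵀ*X) (Xtᵀ*Xt) := by
      rw [hA', Matrix.transpose_fromCols, Matrix.fromRows_mul_fromCols]
    have hent : ∀ u v, (A'ᵀ * A') (f u) (f v) = (A'ᵀ * A') u v := by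
      intro u v
      rcases u with i | i <;> rcases v with j | j <;>
        by_cases hi : i ∈ S <;> by_cases hj : j ∈ S <;>
        simp only [hf, knockoffSwap, hi, hj, if_true, if_false, hGram,
          Matrix.fromBlocks_apply₁₁, Matrix.fromBlocks_apply₁₂,
          Matrix.fromBlocks_apply₂₁, Matrix.fromBlocks_apply₂₂] <;>
        simp only [h1, h2, h3] <;>
        try rfl
      all_goals {
        have hij : i ≠ j := by rintro rfl; simp_all
        simp [Matrix.sub_apply, Matrix.diagonal_apply_ne _ hij] }
    have hsub : A'ᵀ * A' = (A'.submatrix id f)ᵀ * (A'.submatrix id f) := by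
      ext u v
      have : ((A'.submatrix id f)ᵀ * (A'.submatrix id f)) u v = (A'ᵀ * A') (f u) (f v) := by
        simp [Matrix.mul_apply]
      rw [this, hent]
    exact gram_align n A' (A'.submatrix id f) hsub
end

section
/- Null-coefficient invariance under the knockoff rotation: let X̃ be a knockoff matrix for X, S ⊆ {1,…,p}, and let R ∈ ℝ^{n×n} be orthogonal with R[X X̃] = [X X̃]_swap(S). Then for every β ∈ ℝ^p with β_j = 0 for all j ∈ S, one has Rᵀ(Xβ) = Xβ. -/
open Matrix

lemma knockoffSwap_invol {p : ℕ} (S : Finset (Fin p)) (x : Fin p ⊕ Fin p) :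
    knockoffSwap S (knockoffSwap S x) = x := by
  cases x with
  | inl j => by_cases h : j ∈ S <;> simp [knockoffSwap, h]
  | inr j => by_cases h : j ∈ S <;> simp [knockoffSwap, h]

/-- **Null-coefficient invariance under the knockoff rotation.** Let `X̃` be a knockoff
matrix for `X`, `S ⊆ {1,…,p}`, and `R` orthogonal with `R [X X̃] = [X X̃]_swap(S)`.
Then for every `β` vanishing on `S`, one has `Rᵀ(Xβ) = Xβ`. -/
theorem knockoff_rotation_null_invariance (n p : ℕ)
    (X Xt : Matrix (Fin n) (Fin p) ℝ) (s : Fin p → ℝ)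
    (hk1 : Xtᵀ * Xt = Xᵀ * X)
    (hk2 : Xᵀ * Xt = Xᵀ * X - Matrix.diagonal s)
    (hk3 : ∀ j, 0 ≤ s j)
    (S : Finset (Fin p))
    (R : Matrix (Fin n) (Fin n) ℝ) (hRorth : Rᵀ * R = 1)
    (hR : R * Matrix.fromCols X Xt
      = (Matrix.fromCols X Xt).submatrix id (knockoffSwap S))
    (β : Fin p → ℝ) (hβ : ∀ j ∈ S, β j = 0) :
    Rᵀ.mulVec (X.mulVec β) = X.mulVec β := by
  set A := Matrix.fromCols X Xt with hA
  have hb : X.mulVec β = A.mulVec (Sum.elim β 0) := by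
    ext i
    simp [hA, Matrix.fromCols, Matrix.mulVec, dotProduct, Fintype.sum_sum_type]
  have hcomp : (Sum.elim β (0 : Fin p → ℝ)) ∘ knockoffSwap S = Sum.elim β 0 := by
    funext x
    cases x with
    | inl j =>
        by_cases h : j ∈ S <;> simp [knockoffSwap, h, hβ j]
    | inr j =>
        by_cases h : j ∈ S <;> simp [knockoffSwap, h, hβ j]
  have hfix : R.mulVec (X.mulVec β) = X.mulVec β := by
    rw [hb, Matrix.mulVec_mulVec, hR]
    ext i
    have hv : ∀ k, (Sum.elim β (0:Fin p → ℝ)) (knockoffSwap S k) = Sum.elim β 0 k :=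
      fun k => congrFun hcomp k
    have : ∑ k, A i (knockoffSwap S k) * Sum.elim β 0 k
        = ∑ k, A i k * Sum.elim β 0 k := by
      calc ∑ k, A i (knockoffSwap S k) * Sum.elim β 0 k
          = ∑ k, A i (knockoffSwap S k) * Sum.elim β 0 (knockoffSwap S k) := by
            simp only [hv]
        _ = ∑ k, A i k * Sum.elim β 0 k :=
            Equiv.sum_comp (Function.Involutive.toPerm _ (knockoffSwap_invol S))
              (fun m => A i m * Sum.elim β 0 m)
    simpa [Matrix.mulVec, dotProduct, Matrix.submatrix] using this
  calc Rᵀ.mulVec (X.mulVec β) = Rᵀ.mulVec (R.mulVec (X.mulVec β)) := by rw [hfix]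
    _ = (Rᵀ * R).mulVec (X.mulVec β) := (Matrix.mulVec_mulVec _ _ _)
    _ = X.mulVec β := by rw [hRorth, Matrix.one_mulVec]
end

section
/- Distributional swap invariance for statistics with the generalized sufficiency property: let X̃ be a knockoff matrix for X, let β ∈ ℝ^p, σ > 0, and let Y be distributed as N(Xβ, σ²I_n). Let f be a measurable function mapping a 2p×2p matrix, a vector in ℝ^{2p}, and a real number to ℝ^p, and define W(y) = f(AᵀA, Aᵀy, ‖y‖₂). Then for every subset S of the null set {j : β_j = 0}, the pushforward of N(Xβ, σ²I_n) under y ↦ f(A_swap(S)ᵀA_swap(S), A_swap(S)ᵀ y, ‖y‖₂) equals the pushforward of N(Xβ, σ²I_n) under y ↦ W(y); that is, W_swap(S) has the same distribution as W. -/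
open Matrix MeasureTheory ProbabilityTheory BigOperators
open scoped ENNReal NNReal RealInnerProductSpace

/-- The product σ-algebra on matrices (entrywise). -/
instance matrixMeasurableSpace {m n α : Type*} [MeasurableSpace α] :
    MeasurableSpace (Matrix m n α) :=
  MeasurableSpace.pi

/-- The Gaussian measure `N(μ, σ²Iₙ)` on `ℝⁿ`: the pushforward of the `n`-fold product of
standard real Gaussians under `y ↦ μ + σ·y`. -/
noncomputable def gaussianVec {n : ℕ} (μ : Fin n → ℝ) (σ : ℝ) :
    Measure (Fin n → ℝ) :=
  (Measure.pi fun _ : Fin n => gaussianReal 0 1).map fun y => μ + σ • y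

theorem lintegral_pi_prod {n : ℕ} (f : Fin n → ℝ → ℝ≥0∞) (hf : ∀ i, Measurable (f i)) :
    ∫⁻ x : Fin n → ℝ, ∏ i, f i (x i) ∂(Measure.pi fun _ => (volume : Measure ℝ))
      = ∏ i, ∫⁻ x, f i x := by
  induction n with
  | zero => simp
  | succ n ih =>
    rw [← ((measurePreserving_piFinSuccAbove (fun _ : Fin (n+1) => (volume : Measure ℝ))
      0).symm).lintegral_comp_emb (MeasurableEquiv.measurableEmbedding _)]
    simp_rw [MeasurableEquiv.piFinSuccAbove_symm_apply, Fin.insertNthEquiv,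
      Fin.prod_univ_succ, Fin.insertNth_zero, Equiv.coe_fn_mk, Fin.cons_succ,
      Fin.cons_zero, cast_eq]
    rw [lintegral_prod_mul (f := f 0) (g := fun y : Fin n → ℝ => ∏ i : Fin n, f i.succ (y i))
        (hf 0).aemeasurable
        (Finset.measurable_prod Finset.univ
          (fun i _ => (hf i.succ).comp (measurable_pi_apply i))).aemeasurable,
      ih (fun i => f i.succ) (fun i => hf i.succ)]

theorem pi_gaussian_eq_withDensity (n : ℕ) :
    Measure.pi (fun _ : Fin n => gaussianReal 0 1)
      = (Measure.pi fun _ : Fin n => (volume : Measure ℝ)).withDensity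
          (fun x => ∏ i, gaussianPDF 0 1 (x i)) := by
  refine Measure.pi_eq fun s hs => ?_
  rw [withDensity_apply _ (MeasurableSet.univ_pi hs),
    ← lintegral_indicator (MeasurableSet.univ_pi hs)
      (fun x : Fin n → ℝ => ∏ i, gaussianPDF 0 1 (x i))]
  have hind : ∀ x : Fin n → ℝ,
      (Set.univ.pi s).indicator (fun x => ∏ i, gaussianPDF 0 1 (x i)) x
        = ∏ i, (s i).indicator (gaussianPDF 0 1) (x i) := by
    intro x
    by_cases hx : x ∈ Set.univ.pi s
    · rw [Set.indicator_of_mem hx]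
      exact Finset.prod_congr rfl fun i _ =>
        (Set.indicator_of_mem (hx i trivial) _).symm
    · rw [Set.indicator_of_notMem hx]
      simp only [Set.mem_pi, Set.mem_univ, forall_true_left, not_forall] at hx
      obtain ⟨i, hi⟩ := hx
      exact (Finset.prod_eq_zero (Finset.mem_univ i)
        (Set.indicator_of_notMem hi _)).symm
  simp_rw [hind]
  rw [lintegral_pi_prod _ (fun i => (measurable_gaussianPDF 0 1).indicator (hs i))]
  refine Finset.prod_congr rfl fun i _ => ?_
  rw [lintegral_indicator (hs i), gaussianReal_of_var_ne_zero 0 one_ne_zero,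
    withDensity_apply _ (hs i)]

lemma prod_gaussianPDF_congr {n : ℕ} {x y : Fin n → ℝ}
    (h : ∑ i, x i ^ 2 = ∑ i, y i ^ 2) :
    ∏ i, gaussianPDF 0 1 (x i) = ∏ i, gaussianPDF 0 1 (y i) := by
  have key : ∀ z : Fin n → ℝ, ∏ i, gaussianPDF 0 1 (z i)
      = ENNReal.ofReal ((Real.sqrt (2 * Real.pi))⁻¹ ^ n * Real.exp (-(∑ i, z i ^ 2) / 2)) := by
    intro z
    simp only [gaussianPDF]
    rw [← ENNReal.ofReal_prod_of_nonneg (fun i _ => gaussianPDFReal_nonneg 0 1 (z i))]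
    congr 1
    simp only [gaussianPDFReal, NNReal.coe_one, mul_one, sub_zero]
    rw [Finset.prod_mul_distrib, ← Real.exp_sum, Finset.prod_const, Finset.card_univ,
      Fintype.card_fin]
    congr 1
    rw [← Finset.sum_neg_distrib, Finset.sum_div]
  rw [key, key, h]

lemma sum_sq_eq_norm_sq {n : ℕ} (v : EuclideanSpace ℝ (Fin n)) :
    ∑ i, v i ^ 2 = ‖v‖ ^ 2 := by
  rw [EuclideanSpace.norm_eq, Real.sq_sqrt (Finset.sum_nonneg fun i _ => sq_nonneg _)]
  simp [sq_abs]

lemma pi_gaussian_map_isometry {n : ℕ}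
    (T : EuclideanSpace ℝ (Fin n) ≃ₗᵢ[ℝ] EuclideanSpace ℝ (Fin n)) :
    (Measure.pi fun _ : Fin n => gaussianReal 0 1).map
        (fun y : Fin n → ℝ =>
          WithLp.equiv 2 (Fin n → ℝ) (T ((WithLp.equiv 2 (Fin n → ℝ)).symm y)))
      = Measure.pi fun _ : Fin n => gaussianReal 0 1 := by
  set φ : (Fin n → ℝ) → (Fin n → ℝ) :=
    fun y => WithLp.equiv 2 (Fin n → ℝ) (T ((WithLp.equiv 2 (Fin n → ℝ)).symm y)) with hφ
  set ψ := (MeasurableEquiv.toLp 2 (Fin n → ℝ)).symm with hψ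
  have hψcoe : ∀ v : EuclideanSpace ℝ (Fin n), ψ v = WithLp.equiv 2 (Fin n → ℝ) v :=
    fun v => rfl
  have hψsymmcoe : ∀ v : Fin n → ℝ, ψ.symm v = (WithLp.equiv 2 (Fin n → ℝ)).symm v :=
    fun v => rfl
  have hφeq : φ = fun y => ψ (T (ψ.symm y)) := by
    funext y; rw [hψcoe, hψsymmcoe]
  have hφm : Measurable φ := by
    rw [hφeq]
    exact ψ.measurable.comp (T.continuous.measurable.comp ψ.symm.measurable)
  have hvol : MeasurePreserving φ
      (Measure.pi fun _ : Fin n => (volume : Measure ℝ))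
      (Measure.pi fun _ : Fin n => (volume : Measure ℝ)) := by
    have h1 := EuclideanSpace.volume_preserving_symm_measurableEquiv_toLp (Fin n)
    have h2 := T.measurePreserving
    have h3 := h1.symm
    have h4 := (h1.comp h2).comp h3
    rw [volume_pi] at h4
    rw [hφeq]
    exact h4
  have hGφ : ∀ y, (∏ i, gaussianPDF 0 1 (φ y i)) = ∏ i, gaussianPDF 0 1 (y i) := by
    intro y
    refine prod_gaussianPDF_congr ?_
    have hn : ‖T ((WithLp.equiv 2 (Fin n → ℝ)).symm y)‖
        = ‖(WithLp.equiv 2 (Fin n → ℝ)).symm y‖ := T.norm_map _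
    have h1 := sum_sq_eq_norm_sq (T ((WithLp.equiv 2 (Fin n → ℝ)).symm y))
    have h2 := sum_sq_eq_norm_sq ((WithLp.equiv 2 (Fin n → ℝ)).symm y)
    have h3 : ∑ i, (T ((WithLp.equiv 2 (Fin n → ℝ)).symm y)) i ^ 2
        = ∑ i, ((WithLp.equiv 2 (Fin n → ℝ)).symm y) i ^ 2 := by
      rw [h1, h2, hn]
    convert h3 using 2 <;> rfl
  rw [pi_gaussian_eq_withDensity]
  ext A hA
  rw [Measure.map_apply hφm hA, withDensity_apply _ (hφm hA), withDensity_apply _ hA,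
    ← lintegral_indicator (hφm hA) (fun x : Fin n → ℝ => ∏ i, gaussianPDF 0 1 (x i)),
    ← lintegral_indicator hA (fun x : Fin n → ℝ => ∏ i, gaussianPDF 0 1 (x i))]
  have hmeas : Measurable (A.indicator (fun x : Fin n → ℝ => ∏ i, gaussianPDF 0 1 (x i))) :=
    Measurable.indicator
      (Finset.measurable_prod Finset.univ fun i _ =>
        (measurable_gaussianPDF 0 1).comp (measurable_pi_apply i)) hA
  calc ∫⁻ a, (φ ⁻¹' A).indicator (fun x : Fin n → ℝ => ∏ i, gaussianPDF 0 1 (x i)) a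
        ∂(Measure.pi fun _ : Fin n => (volume : Measure ℝ))
      = ∫⁻ a, A.indicator (fun x : Fin n → ℝ => ∏ i, gaussianPDF 0 1 (x i)) (φ a)
        ∂(Measure.pi fun _ : Fin n => (volume : Measure ℝ)) := by
        refine lintegral_congr fun x => ?_
        by_cases hx : φ x ∈ A
        · rw [Set.indicator_of_mem (by exact hx), Set.indicator_of_mem hx, hGφ]
        · rw [Set.indicator_of_notMem (by exact hx), Set.indicator_of_notMem hx]
    _ = _ := hvol.lintegral_comp hmeas

lemma inner_toEuclideanLin {n : ℕ} {ι : Type*} [Fintype ι] [DecidableEq ι]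
    (M : Matrix (Fin n) ι ℝ) (c d : EuclideanSpace ℝ ι) :
    ⟪Matrix.toEuclideanLin M c, Matrix.toEuclideanLin M d⟫
      = ((Mᵀ * M) *ᵥ (WithLp.equiv 2 (ι → ℝ) c)) ⬝ᵥ (WithLp.equiv 2 (ι → ℝ) d) := by
  simp only [PiLp.inner_apply, RCLike.inner_apply, starRingEnd_apply, star_trivial,
    Matrix.toEuclideanLin_apply]
  have : ∀ x : Fin n → ℝ, ∀ i, (WithLp.equiv 2 (Fin n → ℝ)).symm x i = x i := fun _ _ => rfl
  rw [show ∀ u v : Fin n → ℝ, ∑ i, u i * v i = u ⬝ᵥ v from fun _ _ => rfl,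
    dotProduct_mulVec, ← Matrix.mulVec_transpose, Matrix.mulVec_mulVec]
  rw [dotProduct_comm, dotProduct_mulVec, ← Matrix.mulVec_transpose, Matrix.transpose_mul,
    Matrix.transpose_transpose]
  rfl

lemma exists_isometry_of_gram_eq {n : ℕ} {ι : Type*} [Fintype ι] [DecidableEq ι]
    (B C : Matrix (Fin n) ι ℝ) (h : Bᵀ * B = Cᵀ * C) :
    ∃ T : EuclideanSpace ℝ (Fin n) ≃ₗᵢ[ℝ] EuclideanSpace ℝ (Fin n),
      ∀ c, T (Matrix.toEuclideanLin B c) = Matrix.toEuclideanLin C c := by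
  set φa := Matrix.toEuclideanLin B with hφa
  set φb := Matrix.toEuclideanLin C with hφb
  have hinner : ∀ c d, ⟪φa c, φa d⟫ = ⟪φb c, φb d⟫ := by
    intro c d
    rw [hφa, hφb, inner_toEuclideanLin, inner_toEuclideanLin, h]
  have hker : LinearMap.ker φa = LinearMap.ker φb := by
    ext c
    simp only [LinearMap.mem_ker]
    constructor <;> intro hc
    · rw [← inner_self_eq_zero (𝕜 := ℝ), ← hinner, inner_self_eq_zero, hc]
    · rw [← inner_self_eq_zero (𝕜 := ℝ), hinner, inner_self_eq_zero, hc]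
  let e1 := φa.quotKerEquivRange
  let e2 := φb.quotKerEquivRange
  let T0 : LinearMap.range φa ≃ₗ[ℝ] LinearMap.range φb :=
    e1.symm ≪≫ₗ (Submodule.quotEquivOfEq _ _ hker) ≪≫ₗ e2
  have hT0 : ∀ c, T0 ⟨φa c, LinearMap.mem_range_self _ c⟩
      = ⟨φb c, LinearMap.mem_range_self _ c⟩ := by
    intro c
    have h1 : e1 (Submodule.Quotient.mk c) = ⟨φa c, LinearMap.mem_range_self _ c⟩ :=
      Subtype.ext (φa.quotKerEquivRange_apply_mk c)
    have h2 : e2 (Submodule.Quotient.mk c) = ⟨φb c, LinearMap.mem_range_self _ c⟩ :=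
      Subtype.ext (φb.quotKerEquivRange_apply_mk c)
    simp only [T0, LinearEquiv.trans_apply]
    rw [← h1, LinearEquiv.symm_apply_apply, Submodule.quotEquivOfEq_mk, h2]
  let L : LinearMap.range φa →ₗᵢ[ℝ] EuclideanSpace ℝ (Fin n) :=
    { toLinearMap := (LinearMap.range φb).subtype.comp T0.toLinearMap
      norm_map' := by
        rintro ⟨v, hv⟩
        obtain ⟨c, rfl⟩ := hv
        have := hT0 c
        simp only [LinearMap.comp_apply, Submodule.coe_subtype, LinearEquiv.coe_coe]
        rw [show (⟨φa c, LinearMap.mem_range_self _ c⟩ : LinearMap.range φa)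
            = ⟨φa c, ⟨c, rfl⟩⟩ from rfl] at this
        rw [this]
        have hnorm : ‖φb c‖ = ‖φa c‖ := by
          have h2 : ⟪φb c, φb c⟫ = ⟪φa c, φa c⟫ := (hinner c c).symm
          rw [real_inner_self_eq_norm_mul_norm, real_inner_self_eq_norm_mul_norm] at h2
          nlinarith [norm_nonneg (φa c), norm_nonneg (φb c)]
        simpa using hnorm }
  let T1 := L.extend
  have hsurj : Function.Surjective T1 := by
    have hinj : Function.Injective T1.toLinearMap := T1.injective
    exact LinearMap.injective_iff_surjective.mp hinj
  refine ⟨LinearIsometryEquiv.ofSurjective T1 hsurj, fun c => ?_⟩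
  have : T1 (φa c) = φb c := by
    have he := L.extend_apply ⟨φa c, LinearMap.mem_range_self _ c⟩
    simp only [L] at he
    rw [show (T1 (φa c) : EuclideanSpace ℝ (Fin n))
        = L.extend ((⟨φa c, LinearMap.mem_range_self _ c⟩ :
          LinearMap.range φa) : EuclideanSpace ℝ (Fin n)) from rfl, he]
    show ((LinearMap.range φb).subtype ∘ₗ (T0 : LinearMap.range φa →ₗ[ℝ] LinearMap.range φb))
        ⟨φa c, LinearMap.mem_range_self _ c⟩ = φb c
    simp only [LinearMap.comp_apply, Submodule.coe_subtype, LinearEquiv.coe_coe]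
    rw [hT0 c]
  rw [LinearIsometryEquiv.coe_ofSurjective]
  exact this

lemma transpose_mulVec_eq_inner {n : ℕ} {ι : Type*} [Fintype ι] [DecidableEq ι]
    (M : Matrix (Fin n) ι ℝ) (u : EuclideanSpace ℝ (Fin n)) (j : ι) :
    (Mᵀ *ᵥ (WithLp.equiv 2 (Fin n → ℝ) u)) j
      = ⟪Matrix.toEuclideanLin M ((WithLp.equiv 2 (ι → ℝ)).symm (Pi.single j 1)), u⟫ := by
  simp only [Matrix.toEuclideanLin_apply, Equiv.apply_symm_apply, PiLp.inner_apply,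
    RCLike.inner_apply, starRingEnd_apply, star_trivial, Matrix.mulVec_single, mul_one,
    WithLp.equiv_symm_apply, WithLp.equiv_apply, PiLp.toLp_apply]
  simp only [Matrix.mulVec, dotProduct, Matrix.transpose_apply]
  simp [mul_comm]
/-- **Distributional swap invariance for statistics with the generalized sufficiency
property.** Let `X̃` be a knockoff matrix for `X`, `Y ∼ N(Xβ, σ²Iₙ)`, and let the
statistic be `W(y) = f(AᵀA, Aᵀy, ‖y‖₂)` for a measurable `f`, where `A = [X X̃]`.
Then for every subset `S` of the nulls `{j : β_j = 0}`, the statistic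
`W_swap(S)(y) = f(A_swap(S)ᵀA_swap(S), A_swap(S)ᵀy, ‖y‖₂)` has the same distribution
as `W`. -/
theorem knockoff_swap_distribution_invariance (n p : ℕ)
    (X Xt : Matrix (Fin n) (Fin p) ℝ) (s : Fin p → ℝ)
    (hk1 : Xtᵀ * Xt = Xᵀ * X)
    (hk2 : Xᵀ * Xt = Xᵀ * X - Matrix.diagonal s)
    (hk3 : ∀ j, 0 ≤ s j)
    (β : Fin p → ℝ) (σ : ℝ) (hσ : 0 < σ)
    (f : Matrix (Fin p ⊕ Fin p) (Fin p ⊕ Fin p) ℝ → ((Fin p ⊕ Fin p) → ℝ) → ℝ →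
      (Fin p → ℝ))
    (hf : Measurable fun x : Matrix (Fin p ⊕ Fin p) (Fin p ⊕ Fin p) ℝ ×
        ((Fin p ⊕ Fin p) → ℝ) × ℝ => f x.1 x.2.1 x.2.2)
    (S : Finset (Fin p)) (hS : ∀ j ∈ S, β j = 0) :
    (gaussianVec (X.mulVec β) σ).map
        (fun y =>
          f (((Matrix.fromCols X Xt).submatrix id (knockoffSwap S))ᵀ *
              (Matrix.fromCols X Xt).submatrix id (knockoffSwap S))
            (((Matrix.fromCols X Xt).submatrix id (knockoffSwap S))ᵀ.mulVec y)
            (Real.sqrt (∑ i, y i ^ 2)))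
      = (gaussianVec (X.mulVec β) σ).map
          (fun y =>
            f ((Matrix.fromCols X Xt)ᵀ * Matrix.fromCols X Xt)
              ((Matrix.fromCols X Xt)ᵀ.mulVec y)
              (Real.sqrt (∑ i, y i ^ 2))) := by
  classical
  set A := Matrix.fromCols X Xt with hA
  set π := knockoffSwap S with hπdef
  set As := A.submatrix id π with hAs
  -- (0) the swap is an involution
  have hπinv : Function.Involutive π := by
    intro i
    rcases i with a | a <;> by_cases ha : a ∈ S <;> simp [hπdef, knockoffSwap, ha]
  -- (1) Gram matrix invariance
  have hXtX : Xtᵀ * X = Xᵀ * X - Matrix.diagonal s := by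
    calc Xtᵀ * X = (Xᵀ * Xt)ᵀ := by rw [Matrix.transpose_mul, Matrix.transpose_transpose]
      _ = (Xᵀ * X - Matrix.diagonal s)ᵀ := by rw [hk2]
      _ = Xᵀ * X - Matrix.diagonal s := by
          rw [Matrix.transpose_sub, Matrix.transpose_mul, Matrix.transpose_transpose,
            Matrix.diagonal_transpose]
  have hblocks : Aᵀ * A = Matrix.fromBlocks (Xᵀ*X) (Xᵀ*X - Matrix.diagonal s)
      (Xᵀ*X - Matrix.diagonal s) (Xᵀ*X) := by
    rw [hA, Matrix.transpose_fromCols, Matrix.fromRows_mul_fromCols, hk1, hk2, hXtX]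
  have hentry : ∀ i j, (Aᵀ * A) (π i) (π j) = (Aᵀ * A) i j := by
    intro i j
    rw [hblocks]
    rcases i with a | a <;> rcases j with b | b <;>
      by_cases hab : a = b
    all_goals try subst hab
    all_goals
      by_cases ha : a ∈ S <;>
      first
        | (by_cases hb : b ∈ S <;>
            simp [hπdef, knockoffSwap, ha, hb, Matrix.fromBlocks_apply₁₁,
              Matrix.fromBlocks_apply₁₂, Matrix.fromBlocks_apply₂₁,
              Matrix.fromBlocks_apply₂₂, Matrix.sub_apply, Matrix.diagonal_apply,
              hab, Ne.symm hab])
        | simp [hπdef, knockoffSwap, ha, Matrix.fromBlocks_apply₁₁,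
            Matrix.fromBlocks_apply₁₂, Matrix.fromBlocks_apply₂₁,
            Matrix.fromBlocks_apply₂₂]
  have hGram : Asᵀ * As = Aᵀ * A := by
    ext i j
    have h1 : (Asᵀ * As) i j = (Aᵀ * A) (π i) (π j) := by
      simp [hAs, Matrix.mul_apply, Matrix.transpose_apply, Matrix.submatrix_apply]
    rw [h1, hentry]
  -- (2) the isometry
  obtain ⟨T, hT⟩ := exists_isometry_of_gram_eq A As hGram.symm
  set φ : (Fin n → ℝ) → (Fin n → ℝ) :=
    fun y => WithLp.equiv 2 (Fin n → ℝ) (T.symm ((WithLp.equiv 2 (Fin n → ℝ)).symm y)) with hφ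
  have hψcoe : ⇑(MeasurableEquiv.toLp 2 (Fin n → ℝ)).symm = WithLp.equiv 2 (Fin n → ℝ) := rfl
  have hψsymmcoe : ⇑(MeasurableEquiv.toLp 2 (Fin n → ℝ)).symm.symm = (WithLp.equiv 2 (Fin n → ℝ)).symm := rfl
  have hφm : Measurable φ := by
    have : φ = fun y => (MeasurableEquiv.toLp 2 (Fin n → ℝ)).symm
        (T.symm ((MeasurableEquiv.toLp 2 (Fin n → ℝ)).symm.symm y)) := by
      funext y
      rw [hφ]
      rw [congrFun hψcoe, congrFun hψsymmcoe]
    rw [this]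
    exact (MeasurableEquiv.toLp 2 (Fin n → ℝ)).symm.measurable.comp
      (T.symm.continuous.measurable.comp
        (MeasurableEquiv.toLp 2 (Fin n → ℝ)).symm.symm.measurable)
  -- (3) swapped statistic equals original composed with φ
  have hC1 : ∀ y : Fin n → ℝ, Asᵀ *ᵥ y = Aᵀ *ᵥ (φ y) := by
    intro y
    funext j
    have h1 := transpose_mulVec_eq_inner As ((WithLp.equiv 2 (Fin n → ℝ)).symm y) j
    have h2 := transpose_mulVec_eq_inner A
      (T.symm ((WithLp.equiv 2 (Fin n → ℝ)).symm y)) j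
    rw [Equiv.apply_symm_apply] at h1
    rw [h1, ← hT, h2]
    rw [← T.inner_map_map (Matrix.toEuclideanLin A
      ((WithLp.equiv 2 ((Fin p ⊕ Fin p) → ℝ)).symm (Pi.single j 1)))
      (T.symm ((WithLp.equiv 2 (Fin n → ℝ)).symm y)), T.apply_symm_apply]
  have hC4 : ∀ y : Fin n → ℝ, ∑ i, (φ y) i ^ 2 = ∑ i, y i ^ 2 := by
    intro y
    have h1 := sum_sq_eq_norm_sq (T.symm ((WithLp.equiv 2 (Fin n → ℝ)).symm y))
    have h2 := sum_sq_eq_norm_sq ((WithLp.equiv 2 (Fin n → ℝ)).symm y)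
    have hn : ‖T.symm ((WithLp.equiv 2 (Fin n → ℝ)).symm y)‖
        = ‖(WithLp.equiv 2 (Fin n → ℝ)).symm y‖ := T.symm.norm_map _
    have h3 : ∑ i, (T.symm ((WithLp.equiv 2 (Fin n → ℝ)).symm y)) i ^ 2
        = ∑ i, ((WithLp.equiv 2 (Fin n → ℝ)).symm y) i ^ 2 := by rw [h1, h2, hn]
    convert h3 using 2 <;> rfl
  -- (4) T fixes the mean
  set ιv : EuclideanSpace ℝ (Fin p ⊕ Fin p) :=
    (WithLp.equiv 2 ((Fin p ⊕ Fin p) → ℝ)).symm (Sum.elim β 0) with hιv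
  have hι : ∀ j, Sum.elim β (0 : Fin p → ℝ) (π j) = Sum.elim β 0 j := by
    intro j
    rcases j with a | a <;> by_cases ha : a ∈ S <;>
      simp [hπdef, knockoffSwap, ha, hS a]
  have hAsι : As *ᵥ (Sum.elim β 0) = A *ᵥ (Sum.elim β 0) := by
    funext i
    show ∑ j, A i (π j) * Sum.elim β 0 j = ∑ j, A i j * Sum.elim β 0 j
    calc ∑ j, A i (π j) * Sum.elim β 0 j
        = ∑ j, A i (π j) * Sum.elim β 0 (π j) := by
          refine Finset.sum_congr rfl fun j _ => ?_
          rw [hι j]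
      _ = ∑ j, A i j * Sum.elim β 0 j :=
          Fintype.sum_equiv (hπinv.toPerm π)
            (fun j => A i (π j) * Sum.elim β 0 (π j))
            (fun j => A i j * Sum.elim β 0 j) (fun j => rfl)
  have hmean : Matrix.toEuclideanLin A ιv
      = (WithLp.equiv 2 (Fin n → ℝ)).symm (X *ᵥ β) := by
    rw [Matrix.toEuclideanLin_apply, hιv, WithLp.equiv_symm_apply, WithLp.ofLp_toLp]
    rw [hA, Matrix.fromCols_mulVec_sumElim]
    simp
  have hfix : T.symm ((WithLp.equiv 2 (Fin n → ℝ)).symm (X *ᵥ β))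
      = (WithLp.equiv 2 (Fin n → ℝ)).symm (X *ᵥ β) := by
    have hTv : T ((WithLp.equiv 2 (Fin n → ℝ)).symm (X *ᵥ β))
        = (WithLp.equiv 2 (Fin n → ℝ)).symm (X *ᵥ β) := by
      rw [← hmean, hT]
      rw [Matrix.toEuclideanLin_apply, Matrix.toEuclideanLin_apply, hιv,
        WithLp.equiv_symm_apply, WithLp.ofLp_toLp, hAsι]
    calc T.symm ((WithLp.equiv 2 (Fin n → ℝ)).symm (X *ᵥ β))
        = T.symm (T ((WithLp.equiv 2 (Fin n → ℝ)).symm (X *ᵥ β))) := by rw [hTv]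
      _ = _ := T.symm_apply_apply _
  -- (5) φ preserves the Gaussian measure
  have hmapμ : (gaussianVec (X.mulVec β) σ).map φ = gaussianVec (X.mulVec β) σ := by
    rw [gaussianVec]
    have hm : Measurable (fun y : Fin n → ℝ => X.mulVec β + σ • y) :=
      measurable_const.add (measurable_id.const_smul σ)
    rw [Measure.map_map hφm hm]
    have hcomp : φ ∘ (fun y : Fin n → ℝ => X.mulVec β + σ • y)
        = (fun y : Fin n → ℝ => X.mulVec β + σ • y) ∘ φ := by
      funext y
      show φ (X.mulVec β + σ • y) = X.mulVec β + σ • φ y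
      simp only [hφ]
      rw [WithLp.equiv_symm_apply] at hfix ⊢
      rw [WithLp.toLp_add, WithLp.toLp_smul, map_add, _root_.map_smul, hfix]
      rfl
    rw [hcomp, ← Measure.map_map hm hφm, pi_gaussian_map_isometry T.symm]
  -- (6) assemble
  have hGconst : Asᵀ * As = Aᵀ * A := hGram
  have hfun : (fun y : Fin n → ℝ => f (Asᵀ * As) (Asᵀ.mulVec y) (Real.sqrt (∑ i, y i ^ 2)))
      = (fun y : Fin n → ℝ =>
          f (Aᵀ * A) (Aᵀ.mulVec y) (Real.sqrt (∑ i, y i ^ 2))) ∘ φ := by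
    funext y
    show f (Asᵀ * As) (Asᵀ.mulVec y) (Real.sqrt (∑ i, y i ^ 2))
      = f (Aᵀ * A) (Aᵀ.mulVec (φ y)) (Real.sqrt (∑ i, (φ y) i ^ 2))
    rw [hGconst, hC1 y, hC4 y]
  have hW : Measurable (fun y : Fin n → ℝ =>
      f (Aᵀ * A) (Aᵀ.mulVec y) (Real.sqrt (∑ i, y i ^ 2))) := by
    have hmv : Measurable (fun y : Fin n → ℝ => Aᵀ.mulVec y) := by
      refine measurable_pi_lambda _ fun j => ?_
      show Measurable fun y : Fin n → ℝ => ∑ i, Aᵀ j i * y i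
      exact Finset.measurable_sum Finset.univ fun i _ =>
        (measurable_pi_apply i).const_mul _
    have hnorm : Measurable (fun y : Fin n → ℝ => Real.sqrt (∑ i, y i ^ 2)) :=
      (Finset.measurable_sum Finset.univ fun i _ =>
        (measurable_pi_apply i).pow_const 2).sqrt
    exact hf.comp (measurable_const.prodMk (hmv.prodMk hnorm))
  rw [hfun, ← Measure.map_map hW hφm, hmapμ]
end
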